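/- Let f : [0, L] → ℝ be continuous with f(0) = f(L) = 0, and suppose f changes sign exactly once in (0, L) (i.e., there is c ∈ (0, L) with f > 0 on one of (0,c), (c,L) and f < 0 on the other, f(c) = 0). Then for every h ∈ (0, L/2] there exists x ∈ [0, L − h] with f(x + h) = f(x). -/
import Mathlib

lemma levit_aux (L : ℝ) (hL : 0 < L) (f : ℝ → ℝ)
    (hf : ContinuousOn f (Set.Icc 0 L)) (h0 : f 0 = 0) (hLv : f L = 0)
    (c : ℝ) (hc : c ∈ Set.Ioo 0 L) (hfc : f c = 0)
    (hpos : ∀ x ∈ Set.Ioo 0 c, 0 < f x) (hneg : ∀ x ∈ Set.Ioo c L, f x < 0)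
    (h : ℝ) (hh0 : 0 < h) (hh2 : h ≤ L / 2) :
    ∃ x ∈ Set.Icc 0 (L - h), f (x + h) = f x := by
  obtain ⟨hc0, hcL⟩ := hc
  have hhL : h ≤ L - h := by linarith
  have hLh : L - h ≤ L := by linarith
  set g : ℝ → ℝ := fun x => f (x + h) - f x with hg_def
  have hg : ContinuousOn g (Set.Icc 0 (L - h)) := by
    apply ContinuousOn.sub
    · apply hf.comp (continuousOn_id.add continuousOn_const)
      intro x hx
      exact ⟨by simp; linarith [hx.1], by simp at hx ⊢; linarith [hx.2]⟩
    · exact hf.mono (Set.Icc_subset_Icc le_rfl hLh)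
  -- helper to finish from IVT on [0, t] with g t ≤ 0 ≤ g 0
  have finish : ∀ t : ℝ, 0 ≤ t → t ≤ L - h → g t ≤ 0 → 0 ≤ g 0 →
      ∃ x ∈ Set.Icc 0 (L - h), f (x + h) = f x := by
    intro t ht0 htL hgt hg0
    have hsub : Set.Icc (0:ℝ) t ⊆ Set.Icc 0 (L - h) := Set.Icc_subset_Icc le_rfl htL
    have := intermediate_value_Icc' ht0 (hg.mono hsub)
    have h00 : (0:ℝ) ∈ Set.Icc (g t) (g 0) := ⟨hgt, hg0⟩
    obtain ⟨x, hx, hgx⟩ := this h00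
    exact ⟨x, hsub hx, by simpa [hg_def, sub_eq_zero] using hgx⟩
  rcases le_or_gt c h with hch | hhc
  · -- case A: c ≤ h, g 0 ≤ 0 ≤ g (L - h), use IVT on whole interval
    have hg0 : g 0 ≤ 0 := by
      have : f h ≤ 0 := by
        rcases eq_or_lt_of_le hch with he | hl
        · rw [← he, hfc]
        · exact le_of_lt (hneg h ⟨hl, by linarith⟩)
      simpa [hg_def, h0] using this
    have hgLh : 0 ≤ g (L - h) := by
      have hcle : c ≤ L - h := le_trans hch hhL
      have : f (L - h) ≤ 0 := by
        rcases eq_or_lt_of_le hcle with he | hl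
        · rw [← he, hfc]
        · exact le_of_lt (hneg _ ⟨hl, by linarith⟩)
      simp only [hg_def, sub_add_cancel, hLv]
      linarith
    have hsub : Set.Icc (0:ℝ) (L - h) ⊆ Set.Icc 0 (L - h) := le_rfl
    have := intermediate_value_Icc (by linarith : (0:ℝ) ≤ L - h) hg
    obtain ⟨x, hx, hgx⟩ := this ⟨hg0, hgLh⟩
    exact ⟨x, hx, by simpa [hg_def, sub_eq_zero] using hgx⟩
  · have hg0 : 0 ≤ g 0 := by
      have : 0 < f h := hpos h ⟨hh0, hhc⟩
      simp only [hg_def, zero_add, h0]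
      linarith
    rcases le_or_gt (c + h) L with hchL | hchL
    · -- case B: c + h ≤ L, use t = c
      apply finish c (le_of_lt hc0) (by linarith) _ hg0
      have : f (c + h) ≤ 0 := by
        rcases eq_or_lt_of_le hchL with he | hl
        · rw [he, hLv]
        · exact le_of_lt (hneg _ ⟨by linarith, hl⟩)
      simp only [hg_def, hfc]
      linarith
    · -- case C: c + h > L, use t = c - h
      apply finish (c - h) (by linarith) (by linarith) _ hg0
      have : 0 < f (c - h) := hpos _ ⟨by linarith, by linarith⟩
      simp only [hg_def, sub_add_cancel, hfc]
      linarith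

theorem levit_one_sign_change (L : ℝ) (hL : 0 < L) (f : ℝ → ℝ)
    (hf : ContinuousOn f (Set.Icc 0 L)) (h0 : f 0 = 0) (hLv : f L = 0)
    (c : ℝ) (hc : c ∈ Set.Ioo 0 L) (hfc : f c = 0)
    (hsign : ((∀ x ∈ Set.Ioo 0 c, 0 < f x) ∧ (∀ x ∈ Set.Ioo c L, f x < 0)) ∨
             ((∀ x ∈ Set.Ioo 0 c, f x < 0) ∧ (∀ x ∈ Set.Ioo c L, 0 < f x))) :
    ∀ h ∈ Set.Ioc 0 (L / 2), ∃ x ∈ Set.Icc 0 (L - h), f (x + h) = f x := by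
  intro h hh
  rcases hsign with ⟨hpos, hneg⟩ | ⟨hneg, hpos⟩
  · exact levit_aux L hL f hf h0 hLv c hc hfc hpos hneg h hh.1 hh.2
  · obtain ⟨x, hx, hfx⟩ := levit_aux L hL (fun y => -f y)
      hf.neg (by simp [h0]) (by simp [hLv]) c hc (by simp [hfc])
      (fun x hx => by simpa using hneg x hx)
      (fun x hx => by simpa using hpos x hx) h hh.1 hh.2
    exact ⟨x, hx, by simpa using hfx⟩
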